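/- The subgroup Γ_C of SL(2,ℝ) generated by {M(α(n,k), r(n)) : n ≥ 1, 0 ≤ k ≤ 2^(n−1)−1} is not finitely generated: there is no finite subset of SL(2,ℝ) generating Γ_C. -/

import Mathlib

open UpperHalfPlane MatrixGroups

noncomputable section

/-- `s k = Σᵢ 2·tᵢ·3ⁱ` where `k = Σᵢ tᵢ·2ⁱ` is the binary expansion of `k`;
equivalently `s 0 = 0`, `s (2j) = 3·(s j)`, `s (2j+1) = 3·(s j) + 2`. -/
def s : ℕ → ℕ
  | 0 => 0
  | k + 1 =>
    if (k + 1) % 2 = 0 then 3 * s ((k + 1) / 2)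
    else 3 * s ((k + 1) / 2) + 2
decreasing_by all_goals (simp_wf; omega)

/-- The midpoint of the middle third removed at stage `n` from the `k`-th interval of
stage `n−1` of the middle-thirds construction on `[1,2]`. -/
def alphaC (n k : ℕ) : ℝ := 1 + (3 * s k + 1) / 3 ^ n + 1 / (2 * 3 ^ n)

/-- The common radius of the half-circles at stage `n`. -/
def radC (n : ℕ) : ℝ := 1 / (4 * 3 ^ n)

lemma radC_ne (n : ℕ) : radC n ≠ 0 := by unfold radC; positivity

/-- `N(β,β',r)` is the element of `SL(2,ℝ)` whose Möbius transformation has isometric circle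
the half-circle of radius `r` centered at `β`, mapped onto the half-circle of radius `r`
centered at `β'`. -/
def Nmat (β β' r : ℝ) (hr : r ≠ 0) : SL(2, ℝ) :=
  ⟨!![β' / r, -(β * β' + r ^ 2) / r; 1 / r, -β / r], by
    rw [Matrix.det_fin_two_of]; field_simp; ring⟩

/-- `M(α,r) := N(α, −α, r)`. -/
def Mmat (a r : ℝ) (hr : r ≠ 0) : SL(2, ℝ) := Nmat a (-a) r hr

/-- The subgroup of `SL(2,ℝ)` generated by the `M(α(n,k), r(n))`. -/
def ΓC : Subgroup SL(2, ℝ) :=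
  Subgroup.closure
    {g | ∃ n k : ℕ, 1 ≤ n ∧ k < 2 ^ (n - 1) ∧ g = Mmat (alphaC n k) (radC n) (radC_ne n)}

/-! ### Arithmetic facts about `s` -/

lemma s_rec (k : ℕ) (hk : k ≠ 0) :
    s k = if k % 2 = 0 then 3 * s (k / 2) else 3 * s (k / 2) + 2 := by
  obtain ⟨m, rfl⟩ := Nat.exists_eq_succ_of_ne_zero hk
  rw [s]

lemma s_zero : s 0 = 0 := by rw [s]

lemma s_succ_lt (k : ℕ) : s k < s (k + 1) := by
  induction k using Nat.strong_induction_on with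
  | _ k ih =>
    rcases Nat.eq_zero_or_pos k with rfl | hk
    · rw [s_zero, s_rec 1 (by omega)]
      norm_num
    · rw [s_rec k (by omega), s_rec (k+1) (by omega)]
      rcases Nat.even_or_odd k with ⟨j, hj⟩ | ⟨j, hj⟩
      · have h1 : k % 2 = 0 := by omega
        have h2 : (k+1) % 2 ≠ 0 := by omega
        have h3 : (k+1)/2 = k/2 := by omega
        rw [if_pos h1, if_neg h2, h3]
        omega
      · have h1 : k % 2 ≠ 0 := by omega
        have h2 : (k+1) % 2 = 0 := by omega
        have h3 : (k+1)/2 = k/2 + 1 := by omega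
        rw [if_neg h1, if_pos h2, h3]
        have := ih (k/2) (by omega)
        omega

lemma s_strictMono : StrictMono s := strictMono_nat_of_lt_succ s_succ_lt

lemma s_digit (l : ℕ) : ∀ d : ℕ, (s l / 3 ^ d) % 3 ≠ 1 := by
  induction l using Nat.strong_induction_on with
  | _ l ih =>
    intro d
    rcases Nat.eq_zero_or_pos l with rfl | hl
    · rw [s_zero]; simp
    · rw [s_rec l (by omega)]
      rcases d with _ | e
      · split <;> omega
      · have key : ∀ c : ℕ, c < 3 → (3 * s (l/2) + c) / 3 ^ (e+1) = s (l/2) / 3 ^ e := by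
          intro c hc
          rw [pow_succ', ← Nat.div_div_eq_div_mul]
          congr 1
          omega
        have ihl := ih (l/2) (by omega) e
        split
        · simpa using (key 0 (by omega)) ▸ (by simpa using ihl)
        · rw [key 2 (by omega)]; exact ihl

lemma digit_sep (k l d : ℕ) (hd : 1 ≤ d) :
    3 ^ d * (3 * s k + 1) + 3 ^ d ≤ 3 * s l + 1 ∨ 3 * s l + 1 < 3 ^ d * (3 * s k + 1) := by
  by_contra hcon
  push_neg at hcon
  obtain ⟨h1, h2⟩ := hcon
  have hdiv : (3 * s l + 1) / 3 ^ d = 3 * s k + 1 := by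
    apply Nat.div_eq_of_lt_le
    · rw [mul_comm]; omega
    · calc 3 * s l + 1 < 3 ^ d * (3 * s k + 1) + 3 ^ d := by omega
        _ = (3 * s k + 1 + 1) * 3 ^ d := by ring
  obtain ⟨e, rfl⟩ := Nat.exists_eq_add_of_le hd
  have h3 : (3 * s l + 1) / 3 ^ (1 + e) = s l / 3 ^ e := by
    rw [pow_add, pow_one, ← Nat.div_div_eq_div_mul]
    congr 1
    omega
  have := s_digit l e
  rw [h3] at hdiv
  omega

lemma int_sep (k l d : ℕ) (hne : d = 0 → k ≠ l) :
    (3:ℤ) ^ d + 1 ≤ |2 * 3 ^ d * (3 * (s k : ℤ) + 1) + 3 ^ d - 2 * (3 * (s l : ℤ) + 1) - 1| := by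
  rcases Nat.eq_zero_or_pos d with rfl | hd
  · have hkl : s k ≠ s l := fun h => hne rfl (s_strictMono.injective h)
    have hkl' : (s k : ℤ) ≠ (s l : ℤ) := by exact_mod_cast hkl
    rcases abs_cases (2 * (3:ℤ) ^ 0 * (3 * (s k : ℤ) + 1) + 3 ^ 0 - 2 * (3 * (s l : ℤ) + 1) - 1)
      with ⟨h, _⟩ | ⟨h, _⟩ <;> simp only [pow_zero] at h ⊢ <;> omega
  · have hP : (1:ℤ) ≤ 3 ^ d := one_le_pow₀ (by norm_num)
    rcases digit_sep k l d hd with h | h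
    · have h' : (3:ℤ) ^ d * (3 * (s k:ℤ) + 1) + 3 ^ d ≤ 3 * (s l:ℤ) + 1 := by exact_mod_cast h
      rw [abs_sub_comm, le_abs]
      left
      linarith
    · have h' : 3 * (s l:ℤ) + 1 < (3:ℤ) ^ d * (3 * (s k:ℤ) + 1) := by exact_mod_cast h
      rw [le_abs]
      left
      linarith

lemma center_sep_le {n k m l : ℕ} (hnm : n ≤ m) (hne : ¬(n = m ∧ k = l)) :
    2 * (radC n + radC m) ≤ |alphaC n k - alphaC m l| := by
  obtain ⟨d, rfl⟩ := Nat.exists_eq_add_of_le hnm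
  have h3n : (0:ℝ) < 3 ^ n := by positivity
  have h3d : (0:ℝ) < 3 ^ d := by positivity
  have hint := int_sep k l d (fun hd0 => by aesop)
  have hexp : alphaC n k - alphaC (n + d) l =
      ((2 * 3 ^ d * (3 * (s k : ℤ) + 1) + 3 ^ d - 2 * (3 * (s l : ℤ) + 1) - 1 : ℤ) : ℝ)
        / (2 * 3 ^ (n + d)) := by
    unfold alphaC
    push_cast
    rw [pow_add]
    field_simp
    ring
  have hrad : 2 * (radC n + radC (n + d)) = (((3:ℤ)^d + 1 : ℤ) : ℝ) / (2 * 3 ^ (n+d)) := by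
    unfold radC
    push_cast
    rw [pow_add]
    field_simp
    ring
  rw [hexp, hrad, abs_div, abs_of_pos (show (0:ℝ) < 2 * 3 ^ (n+d) by positivity)]
  gcongr
  rw [← Int.cast_abs]
  exact_mod_cast hint

lemma center_sep {n k m l : ℕ} (hne : ¬(n = m ∧ k = l)) :
    2 * (radC n + radC m) ≤ |alphaC n k - alphaC m l| := by
  rcases le_total n m with h | h
  · exact center_sep_le h hne
  · rw [abs_sub_comm]
    have := center_sep_le (k := l) (l := k) h (by tauto)
    linarith

lemma one_le_alphaC (n k : ℕ) : 1 ≤ alphaC n k := by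
  unfold alphaC
  have h1 : (0:ℝ) ≤ (3 * s k + 1 : ℝ) / 3 ^ n := by positivity
  have h2 : (0:ℝ) < 1 / (2 * (3:ℝ) ^ n) := by positivity
  linarith

lemma radC_pos (n : ℕ) : 0 < radC n := by unfold radC; positivity

lemma radC_le (n : ℕ) (hn : 1 ≤ n) : radC n ≤ 1 / 12 := by
  unfold radC
  have h3 : (3:ℝ) ≤ 3 ^ n := by
    calc (3:ℝ) = 3 ^ 1 := (pow_one 3).symm
    _ ≤ 3 ^ n := pow_le_pow_right₀ (by norm_num) hn
  rw [div_le_div_iff₀ (by positivity) (by norm_num)]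
  linarith

lemma radC_le_alphaC (n k : ℕ) : radC n ≤ alphaC n k := by
  have h1 := one_le_alphaC n k
  have h2 := radC_pos n
  unfold radC at *
  have h3 : (1:ℝ) ≤ 3 ^ n := one_le_pow₀ (by norm_num)
  have : 1 / (4 * (3:ℝ) ^ n) ≤ 1 := by
    rw [div_le_one (by positivity)]
    linarith
  linarith

/-! ### Geometry on the upper half plane -/

lemma z_sub_real_ne (z : ℍ) (a : ℝ) : (z : ℂ) - (a:ℂ) ≠ 0 := by
  intro h
  have h2 : (z:ℂ).im = ((a:ℂ):ℂ).im := by rw [sub_eq_zero] at h; rw [h]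
  simp [UpperHalfPlane.coe_im] at h2
  exact z.im_pos.ne' (by simpa using h2)

lemma key_identity (a r : ℝ) (hr : r ≠ 0) (z : ℍ) :
    (↑(Mmat a r hr • z) + (a:ℂ)) * ((z:ℂ) - a) = -(r:ℂ)^2 := by
  rw [UpperHalfPlane.specialLinearGroup_apply]
  have hz : (z : ℂ) - (a:ℂ) ≠ 0 := z_sub_real_ne z a
  have hrc : (r : ℂ) ≠ 0 := by exact_mod_cast hr
  simp only [Mmat, Nmat, UpperHalfPlane.coe_mk, Matrix.SpecialLinearGroup.coe_mk,
    Matrix.of_apply, Matrix.cons_val', Matrix.cons_val_zero, Matrix.empty_val',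
    Matrix.cons_val_fin_one, Matrix.cons_val_one, Matrix.head_cons, Matrix.head_fin_const,
    Algebra.algebraMap_self, RingHom.id_apply]
  push_cast
  have hden : 1 / (r:ℂ) * (z:ℂ) + -(a:ℂ) / (r:ℂ) ≠ 0 := by
    have : 1 / (r:ℂ) * (z:ℂ) + -(a:ℂ) / (r:ℂ) = ((z:ℂ) - a) / r := by ring
    rw [this]
    exact div_ne_zero hz hrc
  rw [div_add' _ _ _ hden, div_mul_eq_mul_div, div_eq_iff hden]
  ring

lemma tri_abs (w : ℂ) (c c' : ℝ) : |c - c'| ≤ ‖w - c‖ + ‖w - c'‖ := by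
  have h1 : |c - c'| = ‖(c:ℂ) - (c':ℂ)‖ := by
    rw [← Complex.ofReal_sub, Complex.norm_real, Real.norm_eq_abs]
  have h2 : ‖(c:ℂ) - (c':ℂ)‖ ≤ ‖(c:ℂ) - w‖ + ‖w - c'‖ :=
    norm_sub_le_norm_sub_add_norm_sub _ _ _
  rw [norm_sub_rev (c:ℂ) w] at h2
  linarith

section Geo
variable {a r : ℝ} (hr0 : 0 < r)

lemma abs_mul_eq (z : ℍ) :
    ‖↑(Mmat a r hr0.ne' • z) + (a:ℂ)‖ * ‖(z:ℂ) - a‖ = r^2 := by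
  rw [← norm_mul, key_identity a r hr0.ne' z]
  simp [abs_of_pos hr0]

lemma step_pos (z : ℍ) (hz : r ≤ ‖(z:ℂ) - a‖) :
    ‖↑(Mmat a r hr0.ne' • z) + (a:ℂ)‖ ≤ r := by
  have h := abs_mul_eq hr0 (a := a) z
  have h2 : (0:ℝ) ≤ ‖↑(Mmat a r hr0.ne' • z) + (a:ℂ)‖ := by positivity
  nlinarith

lemma step_neg (z : ℍ) (hz : r ≤ ‖(z:ℂ) + a‖) :
    ‖↑((Mmat a r hr0.ne')⁻¹ • z) - (a:ℂ)‖ ≤ r := by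
  set M := Mmat a r hr0.ne'
  have h := abs_mul_eq hr0 (a := a) (M⁻¹ • z)
  rw [smul_inv_smul] at h
  have h2 : (0:ℝ) ≤ ‖↑(M⁻¹ • z) - (a:ℂ)‖ := by positivity
  nlinarith

lemma pow_pos_mem (hra : r ≤ a) : ∀ (p : ℕ) (z : ℍ), r ≤ ‖(z:ℂ) - a‖ →
    ‖↑((Mmat a r hr0.ne' ^ (p+1)) • z) + (a:ℂ)‖ ≤ r := by
  intro p
  induction p with
  | zero => intro z hz; rw [pow_one]; exact step_pos hr0 z hz
  | succ p ih =>
    intro z hz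
    set M := Mmat a r hr0.ne' with hM
    set w : ℍ := (M ^ (p+1)) • z with hw
    have h1 : ‖↑w + (a:ℂ)‖ ≤ r := ih z hz
    have h2 : r ≤ ‖↑w - (a:ℂ)‖ := by
      have ht := tri_abs (↑w) a (-a)
      have h3 : |a - (-a)| = 2*a := by rw [abs_of_nonneg (by linarith)]; ring
      have h4 : ((-a:ℝ):ℂ) = -(a:ℂ) := by push_cast; ring
      rw [h3, h4, sub_neg_eq_add] at ht
      linarith
    have h5 : (M ^ (p+2)) • z = M • w := by
      rw [hw, ← mul_smul, ← pow_succ']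
    rw [h5]
    exact step_pos hr0 w h2

lemma pow_neg_mem (hra : r ≤ a) : ∀ (p : ℕ) (z : ℍ), r ≤ ‖(z:ℂ) + a‖ →
    ‖↑(((Mmat a r hr0.ne')⁻¹ ^ (p+1)) • z) - (a:ℂ)‖ ≤ r := by
  intro p
  induction p with
  | zero => intro z hz; rw [pow_one]; exact step_neg hr0 z hz
  | succ p ih =>
    intro z hz
    set M := Mmat a r hr0.ne' with hM
    set w : ℍ := (M⁻¹ ^ (p+1)) • z with hw
    have h1 : ‖↑w - (a:ℂ)‖ ≤ r := ih z hz
    have h2 : r ≤ ‖↑w + (a:ℂ)‖ := by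
      have ht := tri_abs (↑w) (-a) a
      have h3 : |(-a) - a| = 2*a := by rw [abs_sub_comm, abs_of_nonneg (by linarith)]; ring
      have h4 : ((-a:ℝ):ℂ) = -(a:ℂ) := by push_cast; ring
      rw [h3, h4, sub_neg_eq_add] at ht
      linarith
    have h5 : (M⁻¹ ^ (p+2)) • z = M⁻¹ • w := by
      rw [hw, ← mul_smul, ← pow_succ']
    rw [h5]
    exact step_neg hr0 w h2

lemma Mzpow_mem (hra : r ≤ a) (p : ℤ) (hp : p ≠ 0) (z : ℍ)
    (h1 : r ≤ ‖(z:ℂ) - a‖) (h2 : r ≤ ‖(z:ℂ) + a‖) :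
    ‖↑((Mmat a r hr0.ne' ^ p) • z) - (a:ℂ)‖ ≤ r ∨
    ‖↑((Mmat a r hr0.ne' ^ p) • z) + (a:ℂ)‖ ≤ r := by
  set M := Mmat a r hr0.ne' with hM
  rcases lt_trichotomy p 0 with h | h | h
  · left
    obtain ⟨q, hq⟩ : ∃ q : ℕ, p = -(q+1) := ⟨(-p).toNat - 1, by omega⟩
    have : M ^ p = M⁻¹ ^ (q+1) := by
      rw [hq, inv_pow, ← zpow_natCast M (q+1), ← zpow_neg]
      norm_num
    rw [this]
    exact pow_neg_mem hr0 hra q z h2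
  · exact absurd h hp
  · right
    obtain ⟨q, hq⟩ : ∃ q : ℕ, p = (q+1 : ℕ) := ⟨p.toNat - 1, by omega⟩
    have : M ^ p = M ^ (q+1) := by rw [hq, zpow_natCast]
    rw [this]
    exact pow_pos_mem hr0 hra q z h1
end Geo

/-! ### The ping-pong setup -/

/-- Index type for the generators. -/
def IdxC : Type := {p : ℕ × ℕ // 1 ≤ p.1 ∧ p.2 < 2 ^ (p.1 - 1)}

instance : Infinite IdxC :=
  Infinite.of_injective (fun n : ℕ => (⟨(n+1, 0), by simp⟩ : IdxC))
    (fun n m h => by simpa using Subtype.ext_iff.mp h)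

/-- The generators. -/
def gC (i : IdxC) : SL(2, ℝ) := Mmat (alphaC i.1.1 i.1.2) (radC i.1.1) (radC_ne i.1.1)

/-- The ping-pong sets: unions of two closed half-disks. -/
def XC (i : IdxC) : Set ℍ :=
  {z | ‖(z:ℂ) - (alphaC i.1.1 i.1.2 : ℝ)‖ ≤ radC i.1.1 ∨
       ‖(z:ℂ) + (alphaC i.1.1 i.1.2 : ℝ)‖ ≤ radC i.1.1}

lemma X_sep {i j : IdxC} (hij : i ≠ j) {z : ℍ} (hz : z ∈ XC j) :
    radC i.1.1 < ‖(z:ℂ) - (alphaC i.1.1 i.1.2 : ℝ)‖ ∧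
    radC i.1.1 < ‖(z:ℂ) + (alphaC i.1.1 i.1.2 : ℝ)‖ := by
  obtain ⟨⟨n, k⟩, hi⟩ := i
  obtain ⟨⟨m, l⟩, hj⟩ := j
  have hne : ¬(n = m ∧ k = l) := by
    rintro ⟨rfl, rfl⟩
    exact hij rfl
  set a1 := alphaC n k with ha1d
  set a2 := alphaC m l with ha2d
  set r1 := radC n with hr1d
  set r2 := radC m with hr2d
  have hsep : 2 * (r1 + r2) ≤ |a1 - a2| := center_sep hne
  have ha1 : 1 ≤ a1 := one_le_alphaC n k
  have ha2 : 1 ≤ a2 := one_le_alphaC m l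
  have hr1p : 0 < r1 := radC_pos n
  have hr2p : 0 < r2 := radC_pos m
  have hr1s : r1 ≤ 1/12 := radC_le n hi.1
  have hr2s : r2 ≤ 1/12 := radC_le m hj.1
  have e1 : ((-a1:ℝ):ℂ) = -(a1:ℂ) := by push_cast; ring
  have e2 : ((-a2:ℝ):ℂ) = -(a2:ℂ) := by push_cast; ring
  have t1 := tri_abs (z:ℂ) a1 a2
  have t2 := tri_abs (z:ℂ) a1 (-a2)
  have t3 := tri_abs (z:ℂ) (-a1) a2
  have t4 := tri_abs (z:ℂ) (-a1) (-a2)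
  simp only [e1, e2, sub_neg_eq_add] at t2 t3 t4
  have u2 : |a1 + a2| = a1 + a2 := abs_of_nonneg (by linarith)
  have u3 : |(-a1) - a2| = a1 + a2 := by
    rw [show (-a1) - a2 = -(a1 + a2) by ring, abs_neg, abs_of_nonneg (by linarith)]
  have u4 : |(-a1) + a2| = |a1 - a2| := by
    rw [show (-a1) + a2 = -(a1 - a2) by ring, abs_neg]
  rw [u2] at t2
  rw [u3] at t3
  rw [u4] at t4
  rcases hz with hz | hz <;> constructor <;> linarith

lemma XC_nonempty (i : IdxC) : (XC i).Nonempty := by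
  set a := alphaC i.1.1 i.1.2
  set r := radC i.1.1
  have hr : 0 < r := radC_pos i.1.1
  refine ⟨⟨(a:ℂ) + r * Complex.I, by simp [Complex.add_im, hr]⟩, Or.inl ?_⟩
  show ‖(a:ℂ) + r * Complex.I - a‖ ≤ r
  rw [show (a:ℂ) + r * Complex.I - a = r * Complex.I by ring]
  simp [abs_of_pos hr]

lemma XC_disj : Pairwise (Function.onFun Disjoint XC) := by
  intro i j hij
  rw [Function.onFun, Set.disjoint_left]
  intro z hzi hzj
  obtain ⟨h1, h2⟩ := X_sep hij hzj
  rcases hzi with h | h <;> linarith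

open Monoid Pointwise

abbrev HC : IdxC → Type := fun _ => Multiplicative ℤ

/-- The homomorphisms from `ℤ` sending `1` to the generators. -/
def fC (i : IdxC) : HC i →* SL(2, ℝ) := zpowersHom _ (gC i)

lemma XC_pp : Pairwise fun i j => ∀ h : HC i, h ≠ 1 → fC i h • XC j ⊆ XC i := by
  intro i j hij h hh
  rintro _ ⟨z, hz, rfl⟩
  obtain ⟨h1, h2⟩ := X_sep hij hz
  have hp : Multiplicative.toAdd h ≠ 0 := fun hc => hh (by rwa [← toAdd_eq_zero])
  have := Mzpow_mem (radC_pos i.1.1) (radC_le_alphaC i.1.1 i.1.2)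
    (Multiplicative.toAdd h) hp z h1.le h2.le
  rw [fC, zpowersHom_apply]
  exact (Or.imp id id this)

lemma liftC_injective : Function.Injective (CoprodI.lift fC) :=
  CoprodI.lift_injective_of_ping_pong fC
    (Or.inl (le_trans (by exact_mod_cast (Cardinal.nat_lt_aleph0 3).le) (Cardinal.aleph0_le_mk _)))
    XC XC_nonempty XC_disj XC_pp

lemma gen_set_eq :
    {g | ∃ n k : ℕ, 1 ≤ n ∧ k < 2 ^ (n - 1) ∧ g = Mmat (alphaC n k) (radC n) (radC_ne n)} =
      Set.range gC := by
  ext x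
  constructor
  · rintro ⟨n, k, h1, h2, rfl⟩
    exact ⟨⟨(n, k), ⟨h1, h2⟩⟩, rfl⟩
  · rintro ⟨⟨⟨n, k⟩, ⟨h1, h2⟩⟩, rfl⟩
    exact ⟨n, k, h1, h2, rfl⟩

lemma exists_finset_of_mem (x : SL(2,ℝ)) (hx : x ∈ Subgroup.closure (Set.range gC)) :
    ∃ T : Finset IdxC, x ∈ Subgroup.closure (gC '' T) := by
  classical
  induction hx using Subgroup.closure_induction with
  | mem x hx =>
    obtain ⟨i, rfl⟩ := hx
    exact ⟨{i}, Subgroup.subset_closure (by simp)⟩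
  | one => exact ⟨∅, one_mem _⟩
  | mul x y hx hy ihx ihy =>
    obtain ⟨T1, h1⟩ := ihx
    obtain ⟨T2, h2⟩ := ihy
    refine ⟨T1 ∪ T2, mul_mem ?_ ?_⟩
    · exact Subgroup.closure_mono (Set.image_mono (by simp [Finset.coe_subset])) h1
    · exact Subgroup.closure_mono (Set.image_mono (by simp [Finset.coe_subset])) h2
  | inv x hx ihx =>
    obtain ⟨T, h⟩ := ihx
    exact ⟨T, inv_mem h⟩

/-- `Γ_C` is not finitely generated. -/
theorem stmt_11 : ¬ ∃ F : Set SL(2, ℝ), F.Finite ∧ Subgroup.closure F = ΓC := by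
  classical
  rintro ⟨F, hFfin, hFeq⟩
  rw [ΓC, gen_set_eq] at hFeq
  -- each element of F lies in the closure of finitely many generators
  have hmem : ∀ x ∈ F, x ∈ Subgroup.closure (Set.range gC) := by
    intro x hx
    rw [← hFeq]
    exact Subgroup.subset_closure hx
  choose T hT using fun x (hx : x ∈ F) => exists_finset_of_mem x (hmem x hx)
  set T0 : Finset IdxC := hFfin.toFinset.attach.biUnion
    (fun x => T x.1 (hFfin.mem_toFinset.mp x.2)) with hT0
  have hFsub : F ⊆ (Subgroup.closure (gC '' T0) : Set SL(2,ℝ)) := by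
    intro x hx
    refine Subgroup.closure_mono (Set.image_mono ?_) (hT x hx)
    intro i hi
    simp only [hT0, Finset.coe_biUnion, Finset.mem_coe, Set.mem_iUnion]
    exact ⟨⟨x, hFfin.mem_toFinset.mpr hx⟩, Finset.mem_attach _ _, hi⟩
  have hle : Subgroup.closure (Set.range gC) ≤ Subgroup.closure (gC '' T0) := by
    rw [← hFeq]
    exact Subgroup.closure_le _ |>.mpr hFsub
  -- pick a generator outside T0
  obtain ⟨i0, hi0⟩ := Infinite.exists_notMem_finset T0
  have hgi0 : gC i0 ∈ Subgroup.closure (gC '' T0) :=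
    hle (Subgroup.subset_closure (Set.mem_range_self i0))
  -- transfer to the free product
  set Φ := CoprodI.lift fC with hΦ
  set e : IdxC → CoprodI HC := fun i => CoprodI.of (M := HC) (i := i) (Multiplicative.ofAdd (1:ℤ)) with he
  have hge : ∀ i, gC i = Φ (e i) := by
    intro i
    rw [he, hΦ]
    simp [fC]
  have himg : gC '' T0 = Φ '' (e '' T0) := by
    rw [← Set.image_comp]
    exact Set.image_congr (fun i _ => hge i)
  have hmap : Subgroup.closure (gC '' T0) = (Subgroup.closure (e '' T0)).map Φ := by
    rw [himg, MonoidHom.map_closure]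
  rw [hmap] at hgi0
  obtain ⟨w, hwK, hw⟩ := hgi0
  have hwe : w = e i0 := liftC_injective (by rw [hw, ← hge])
  subst hwe
  -- kill with a homomorphism to ℤ
  set χ : CoprodI HC →* Multiplicative ℤ :=
    CoprodI.lift (fun i => if i = i0 then MonoidHom.id (Multiplicative ℤ) else 1) with hχ
  have hker : Subgroup.closure (e '' T0) ≤ χ.ker := by
    rw [Subgroup.closure_le]
    rintro _ ⟨i, hiT, rfl⟩
    have hne : i ≠ i0 := fun hc => hi0 (hc ▸ hiT)
    simp only [SetLike.mem_coe, MonoidHom.mem_ker, hχ, he, CoprodI.lift_of, if_neg hne]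
    simp
  have h1 : χ (e i0) = 1 := hker hwK
  rw [hχ, he, CoprodI.lift_of, if_pos rfl] at h1
  simp only [MonoidHom.id_apply] at h1
  simp at h1
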